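/- Let G act on S by automorphisms, A = S#G, and C_i = kG ⊗ C_i' ⊗ kG with C_i' finite dimensional and G-graded with homogeneous basis {x_m}. Then A ⊗_{kG} C_i is a free right A-module with free generating set {g ⊗ x_m ⊗ 1 : g ∈ G, 1 ≤ m ≤ dim C_i'}. -/

import Mathlib

open TensorProduct

/-- A presentation of `A` as the skew group algebra `S#G`. -/
structure SkewPresentation (k S G A : Type*) [CommSemiring k] [Ring S] [Algebra k S]
    [Group G] [Ring A] [Algebra k A] (act : G →* S ≃ₐ[k] S) where
  ιS : S →ₐ[k] A
  ιG : G →* Aˣ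
  comm : ∀ (g : G) (s : S), (ιG g : A) * ιS s = ιS (act g s) * (ιG g : A)
  bij : Function.Bijective fun f : G →₀ S => f.sum fun g s => ιS s * (ιG g : A)

set_option synthInstance.maxHeartbeats 1000000 in
/-- with `C_i = kG ⊗ C' ⊗ kG`, `C'` finite dimensional and
`G`-graded with homogeneous basis `{x_m}`, the right `A`-module
`A ⊗_{kG} C_i ≅ A ⊗ C' ⊗ kG` (with the braided right action) is free with
free generating set `{g ⊗ x_m ⊗ 1 : g ∈ G, m}`; i.e. the map
`((g,m) ↦ a_{g,m}) ↦ Σ (g ⊗ x_m ⊗ 1)·a_{g,m}` is bijective. -/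
theorem stmt12 {k S G A C' : Type*} [Field k] [Ring S] [Algebra k S]
    [Group G] [Finite G] [DecidableEq G] [Ring A] [Algebra k A]
    [AddCommGroup C'] [Module k C'] {r : ℕ}
    (act : G →* S ≃ₐ[k] S) (pres : SkewPresentation k S G A act)
    (𝒞 : G → Submodule k C') (hint : DirectSum.IsInternal 𝒞)
    (bC : Module.Basis (Fin r) k C') (hhom : ∀ m : Fin r, ∃ h : G, bC m ∈ 𝒞 h)
    -- the right `A`-module structure on `A ⊗ C' ⊗ kG`
    (ρ : A →ₗ[k] Module.End k (A ⊗[k] (C' ⊗[k] MonoidAlgebra k G)))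
    (hρone : ρ 1 = 1) (hρmul : ∀ a b : A, ρ (a * b) = ρ b * ρ a)
    (hρS : ∀ (ℓ : G), ∀ x ∈ 𝒞 ℓ, ∀ (a : A) (g : G) (s : S),
      ρ (pres.ιS s) (a ⊗ₜ[k] (x ⊗ₜ[k] MonoidAlgebra.of k G g)) =
        (a * pres.ιS (act (ℓ * g) s)) ⊗ₜ[k] (x ⊗ₜ[k] MonoidAlgebra.of k G g))
    (hρG : ∀ (h : G) (a : A) (x : C') (g : G),
      ρ ((pres.ιG h : Aˣ) : A) (a ⊗ₜ[k] (x ⊗ₜ[k] MonoidAlgebra.of k G g)) =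
        a ⊗ₜ[k] (x ⊗ₜ[k] MonoidAlgebra.of k G (g * h))) :
    Function.Bijective fun f : (G × Fin r) →₀ A =>
      f.sum fun p a =>
        ρ a (((pres.ιG p.1 : Aˣ) : A) ⊗ₜ[k]
          (bC p.2 ⊗ₜ[k] (1 : MonoidAlgebra k G))) := by
  classical
  letI : Fintype G := Fintype.ofFinite G
  obtain ⟨ℓ, hmem⟩ : ∃ ℓ : Fin r → G, ∀ m, bC m ∈ 𝒞 (ℓ m) :=
    ⟨fun m => (hhom m).choose, fun m => (hhom m).choose_spec⟩
  -- the linear isomorphism `G →₀ S ≃ A`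
  set L : (G →₀ S) →ₗ[k] A :=
    Finsupp.lsum k fun g =>
      (LinearMap.mulRight k ((pres.ιG g : Aˣ) : A)).comp pres.ιS.toLinearMap with hLdef
  have hLapp : ∀ f : G →₀ S, L f = f.sum fun g s => pres.ιS s * ((pres.ιG g : Aˣ) : A) :=
    fun f => by rw [hLdef, Finsupp.lsum_apply]; rfl
  have hLbij : Function.Bijective L := by
    have : ⇑L = fun f : G →₀ S => f.sum fun g s => pres.ιS s * ((pres.ιG g : Aˣ) : A) :=
      funext hLapp
    rw [this]; exact pres.bij
  let eA : (G →₀ S) ≃ₗ[k] A := LinearEquiv.ofBijective L hLbij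
  have heA : ∀ f : G →₀ S, eA f = f.sum fun g s => pres.ιS s * ((pres.ιG g : Aˣ) : A) :=
    fun f => hLapp f
  have heAsingle : ∀ (g : G) (s : S),
      eA (Finsupp.single g s) = pres.ιS s * ((pres.ιG g : Aˣ) : A) := by
    intro g s
    rw [heA, Finsupp.sum_single_index]
    simp
  -- basis of the monoid algebra and of `C' ⊗ kG`
  let bG : Module.Basis G k (MonoidAlgebra k G) := MonoidAlgebra.basis G k
  have hbG : ∀ h : G, bG h = MonoidAlgebra.of k G h := by
    intro h
    show MonoidAlgebra.basis G k h = _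
    rw [MonoidAlgebra.basis_apply]
    rfl
  let b2 : Module.Basis (Fin r × G) k (C' ⊗[k] MonoidAlgebra k G) := bC.tensorProduct bG
  let Ψ : A ⊗[k] (C' ⊗[k] MonoidAlgebra k G) ≃ₗ[k] ((Fin r × G) →₀ A) :=
    (TensorProduct.congr (LinearEquiv.refl k A) b2.repr).trans
      (TensorProduct.finsuppScalarRight k k A (Fin r × G))
  have hΨ : ∀ (a : A) (m : Fin r) (h : G),
      Ψ (a ⊗ₜ[k] (bC m ⊗ₜ[k] MonoidAlgebra.of k G h)) = Finsupp.single (m, h) a := by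
    intro a m h
    have h1 : b2.repr (bC m ⊗ₜ[k] MonoidAlgebra.of k G h) = Finsupp.single (m, h) 1 := by
      rw [← hbG, ← Module.Basis.tensorProduct_apply]
      exact b2.repr_self (m, h)
    show (TensorProduct.finsuppScalarRight k k A (Fin r × G))
        ((TensorProduct.congr (LinearEquiv.refl k A) b2.repr)
          (a ⊗ₜ[k] (bC m ⊗ₜ[k] MonoidAlgebra.of k G h))) = _
    rw [TensorProduct.congr_tmul, h1]
    rw [TensorProduct.finsuppScalarRight_apply_tmul]
    rw [Finsupp.sum_single_index] <;> simp
  -- key computation of the action on the generators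
  have keyA : ∀ (g : G) (m : Fin r) (a : A),
      ρ a (((pres.ιG g : Aˣ) : A) ⊗ₜ[k] (bC m ⊗ₜ[k] (1 : MonoidAlgebra k G))) =
        (eA.symm a).sum fun h s =>
          (pres.ιS (act (g * ℓ m) s) * ((pres.ιG g : Aˣ) : A)) ⊗ₜ[k]
            (bC m ⊗ₜ[k] MonoidAlgebra.of k G h) := by
    intro g m a
    conv_lhs => rw [← eA.apply_symm_apply a]
    generalize eA.symm a = t
    rw [heA t, map_finsuppSum ρ]
    rw [Finsupp.sum, Finsupp.sum, LinearMap.coe_sum, Finset.sum_apply]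
    refine Finset.sum_congr rfl fun h _ => ?_
    have h1 : (1 : MonoidAlgebra k G) = MonoidAlgebra.of k G (1 : G) := by
      simp [MonoidAlgebra.one_def, MonoidAlgebra.of_apply]
    rw [hρmul, Module.End.mul_apply, h1,
      hρS (ℓ m) (bC m) (hmem m) _ 1 (t h), mul_one, hρG, one_mul,
      pres.comm g (act (ℓ m) (t h)), map_mul, AlgEquiv.mul_apply]
  -- the explicit bijective comparison map
  let τ : ((G × Fin r) → (G → S)) ≃ₗ[k] ((Fin r × G) → (G → S)) :=
    { toFun := fun t q g => t (g, q.1) q.2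
      invFun := fun u p h => u (p.2, h) p.1
      map_add' := fun _ _ => rfl
      map_smul' := fun _ _ => rfl
      left_inv := fun t => rfl
      right_inv := fun u => rfl }
  let W : ((G × Fin r) →₀ A) ≃ₗ[k] ((Fin r × G) →₀ A) :=
    (Finsupp.linearEquivFunOnFinite k A (G × Fin r)) ≪≫ₗ
    (LinearEquiv.piCongrRight fun _ : G × Fin r =>
      eA.symm ≪≫ₗ Finsupp.linearEquivFunOnFinite k S G) ≪≫ₗ
    (LinearEquiv.piCongrRight fun p : G × Fin r =>
      LinearEquiv.piCongrRight fun _ : G => (act (p.1 * ℓ p.2)).toLinearEquiv) ≪≫ₗ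
    τ ≪≫ₗ
    (LinearEquiv.piCongrRight fun _ : Fin r × G =>
      (Finsupp.linearEquivFunOnFinite k S G).symm ≪≫ₗ eA) ≪≫ₗ
    (Finsupp.linearEquivFunOnFinite k A (Fin r × G)).symm
  have hW : ∀ (f : (G × Fin r) →₀ A) (q : Fin r × G),
      W f q = eA ((Finsupp.linearEquivFunOnFinite k S G).symm
        fun g => act (g * ℓ q.1) ((eA.symm (f (g, q.1))) q.2)) := fun f q => rfl
  -- the map in question, as a linear map
  let v : G × Fin r → A ⊗[k] (C' ⊗[k] MonoidAlgebra k G) := fun p =>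
    ((pres.ιG p.1 : Aˣ) : A) ⊗ₜ[k] (bC p.2 ⊗ₜ[k] (1 : MonoidAlgebra k G))
  let Fl : ((G × Fin r) →₀ A) →ₗ[k] A ⊗[k] (C' ⊗[k] MonoidAlgebra k G) :=
    Finsupp.lsum k fun p => (LinearMap.applyₗ (v p)).comp ρ
  have hFl : (fun f : (G × Fin r) →₀ A =>
      f.sum fun p a => ρ a (((pres.ιG p.1 : Aˣ) : A) ⊗ₜ[k]
        (bC p.2 ⊗ₜ[k] (1 : MonoidAlgebra k G)))) = ⇑Fl := by
    funext f
    rw [Finsupp.lsum_apply]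
    rfl
  -- main identity : Ψ ∘ Fl = W
  have hmain : Ψ.toLinearMap.comp Fl = W.toLinearMap := by
    apply Finsupp.lhom_ext
    intro p a
    have hsingle : Fl (Finsupp.single p a) = ρ a (v p) := by
      rw [Finsupp.lsum_single]; rfl
    simp only [LinearMap.comp_apply, LinearEquiv.coe_coe]
    rw [hsingle, show ρ a (v p) = _ from keyA p.1 p.2 a, Finsupp.sum, map_sum]
    simp_rw [hΨ]
    refine Finsupp.ext fun q => ?_
    obtain ⟨m, h₀⟩ := q
    rw [hW, Finset.sum_apply']
    by_cases hm : m = p.2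
    · subst hm
      -- left hand side
      have hL : (∑ h ∈ (eA.symm a).support,
          (Finsupp.single ((p.2 : Fin r), h)
            (pres.ιS (act (p.1 * ℓ p.2) ((eA.symm a) h)) * ((pres.ιG p.1 : Aˣ) : A))) (p.2, h₀))
          = pres.ιS (act (p.1 * ℓ p.2) ((eA.symm a) h₀)) * ((pres.ιG p.1 : Aˣ) : A) := by
        have h1 : ∀ h ∈ (eA.symm a).support,
            (Finsupp.single ((p.2 : Fin r), h)
              (pres.ιS (act (p.1 * ℓ p.2) ((eA.symm a) h)) * ((pres.ιG p.1 : Aˣ) : A))) (p.2, h₀)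
            = if h = h₀ then
                pres.ιS (act (p.1 * ℓ p.2) ((eA.symm a) h)) * ((pres.ιG p.1 : Aˣ) : A)
              else 0 := by
          intro h _
          rw [Finsupp.single_apply]
          simp
        rw [Finset.sum_congr rfl h1, Finset.sum_ite_eq' (eA.symm a).support h₀]
        by_cases hh : h₀ ∈ (eA.symm a).support
        · rw [if_pos hh]
        · rw [if_neg hh]
          rw [Finsupp.notMem_support_iff] at hh
          rw [hh]
          simp
      rw [hL]
      -- right hand side
      have hfun : (fun g => act (g * ℓ p.2) ((eA.symm ((Finsupp.single p a) (g, p.2))) h₀)) =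
          Pi.single p.1 (act (p.1 * ℓ p.2) ((eA.symm a) h₀)) := by
        funext g
        by_cases hg : g = p.1
        · subst hg
          have hp : (Finsupp.single p a) (p.1, p.2) = a := by
            conv_lhs => rw [show ((p.1, p.2) : G × Fin r) = p from Prod.mk.eta]
            exact Finsupp.single_eq_same
          rw [hp, Pi.single_eq_same]
        · have hp : (Finsupp.single p a) (g, p.2) = 0 := by
            refine Finsupp.single_eq_of_ne' fun he => hg ?_
            exact (congrArg Prod.fst he).symm
          rw [hp, Pi.single_eq_of_ne hg]
          simp
      rw [hfun, Finsupp.linearEquivFunOnFinite_symm_single, heAsingle]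
    · -- both sides vanish
      have hL : ∀ h ∈ (eA.symm a).support,
          (Finsupp.single ((p.2 : Fin r), h)
            (pres.ιS (act (p.1 * ℓ p.2) ((eA.symm a) h)) * ((pres.ιG p.1 : Aˣ) : A))) (m, h₀)
          = 0 := by
        intro h _
        refine Finsupp.single_eq_of_ne' fun he => hm ?_
        exact (congrArg Prod.fst he).symm
      rw [Finset.sum_congr rfl hL, Finset.sum_const, smul_zero]
      have hz : (fun g => act (g * ℓ m) ((eA.symm ((Finsupp.single p a) (g, m))) h₀)) =
          (0 : G → S) := by
        funext g
        have hp : (Finsupp.single p a) (g, m) = 0 := by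
          refine Finsupp.single_eq_of_ne' fun he => hm ?_
          exact (congrArg Prod.snd he).symm
        rw [hp]
        simp
      rw [hz]
      simp
  -- conclude
  have hfinal : ∀ f, Fl f = Ψ.symm (W f) := by
    intro f
    have := congrArg (fun T => T f) (congrArg (fun (T : _ →ₗ[k] _) => ⇑T) hmain)
    simp only [LinearMap.coe_comp, Function.comp_apply, LinearEquiv.coe_coe] at this
    rw [← this, LinearEquiv.symm_apply_apply]
  rw [hFl, funext hfinal]
  exact Ψ.symm.bijective.comp W.bijective
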